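/- For the linearly oriented quiver A_n, suppose i+1 ≤ k ≤ j+1 ≤ l and Y is a non-trivial extension of E^{ij} by E^{kl}. Then Y ≅ E^{il} ⊕ E^{kj}, where E^{kj} is interpreted as the zero representation when k = j+1. -/

import Mathlib

open Classical

/-- A representation of a quiver (given by vertex type `ι`, arrow type `E`,
and source/target maps `s t : E → ι`) over a field `K`: a finite-dimensional
`K`-vector space at each vertex and a linear map along each arrow. -/
structure QRep (K : Type) [Field K] {ι : Type} {E : Type} (s t : E → ι) : Type 1 where
  V : ι → Type
  [addV : ∀ i, AddCommGroup (V i)]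
  [modV : ∀ i, Module K (V i)]
  [fdV : ∀ i, FiniteDimensional K (V i)]
  f : ∀ e : E, V (s e) →ₗ[K] V (t e)

attribute [instance] QRep.addV QRep.modV QRep.fdV

namespace QRep

variable {K : Type} [Field K] {ι E : Type} {s t : E → ι}

/-- A morphism of representations: linear maps at each vertex commuting with the arrow maps. -/
structure Hom (X Y : QRep K s t) : Type where
  φ : ∀ i, X.V i →ₗ[K] Y.V i
  comm : ∀ e, (Y.f e).comp (φ (s e)) = (φ (t e)).comp (X.f e)

def Hom.Surjective {X Y : QRep K s t} (f : Hom X Y) : Prop := ∀ i, Function.Surjective (f.φ i)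

def Hom.Injective {X Y : QRep K s t} (f : Hom X Y) : Prop := ∀ i, Function.Injective (f.φ i)

/-- Two representations are isomorphic if there is a morphism bijective at every vertex. -/
def Iso (X Y : QRep K s t) : Prop := ∃ f : Hom X Y, ∀ i, Function.Bijective (f.φ i)

/-- Direct sum of two representations, taken vertexwise. -/
def dsum (X Y : QRep K s t) : QRep K s t where
  V i := X.V i × Y.V i
  f e := (X.f e).prodMap (Y.f e)

instance : Module.Finite K PUnit :=
  Module.Finite.of_surjective (0 : K →ₗ[K] PUnit) (fun x => ⟨0, Subsingleton.elim _ _⟩)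

/-- The zero representation. -/
def zero : QRep K s t where
  V _ := PUnit
  f _ := 0

/-- A representation is zero if all its vector spaces are zero. -/
def IsZero (X : QRep K s t) : Prop := ∀ i, ∀ x : X.V i, x = 0

/-- Indecomposable: nonzero, and not isomorphic to a direct sum of two nonzero representations. -/
def Indec (X : QRep K s t) : Prop :=
  ¬ X.IsZero ∧ ∀ A B : QRep K s t, Iso X (A.dsum B) → A.IsZero ∨ B.IsZero

/-- Direct sum of a finite list of representations. -/
noncomputable def dsumList : List (QRep K s t) → QRep K s t
  | [] => zero
  | X :: L => X.dsum (dsumList L)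

/-- An extension `Y` of `Z` by `X`: an injective morphism `X → Y` and a surjective
morphism `Y → Z` whose vertexwise kernel is the image of `X`. -/
structure Extension (X Y Z : QRep K s t) : Type where
  incl : Hom X Y
  proj : Hom Y Z
  inj : ∀ i, Function.Injective (incl.φ i)
  surj : ∀ i, Function.Surjective (proj.φ i)
  exact : ∀ i, LinearMap.ker (proj.φ i) = LinearMap.range (incl.φ i)

/-- An extension is trivial (split) if there is a morphism `Y → X` restricting to the identity on `X`. -/
def Extension.Trivial {X Y Z : QRep K s t} (E : Extension X Y Z) : Prop :=
  ∃ r : Hom Y X, ∀ i x, r.φ i (E.incl.φ i x) = x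

/-- A subrepresentation of `Y`: a subspace at each vertex, stable under the arrow maps. -/
structure Sub (Y : QRep K s t) : Type where
  p : ∀ i, Submodule K (Y.V i)
  stable : ∀ e, ∀ x ∈ p (s e), Y.f e x ∈ p (t e)

def Sub.toRep {Y : QRep K s t} (S : Sub Y) : QRep K s t where
  V i := S.p i
  f e := (Y.f e).restrict (S.stable e)

/-- The quotient representation `Y/X`. -/
def Sub.quot {Y : QRep K s t} (S : Sub Y) : QRep K s t where
  V i := Y.V i ⧸ S.p i
  f e := Submodule.mapQ (S.p (s e)) (S.p (t e)) (Y.f e) (fun x hx => S.stable e x hx)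

/-- The inclusion morphism of a subrepresentation. -/
def Sub.incl {Y : QRep K s t} (S : Sub Y) : Hom S.toRep Y where
  φ i := (S.p i).subtype
  comm e := by ext x; rfl

/-- The quotient morphism onto the quotient representation. -/
def Sub.mkQ {Y : QRep K s t} (S : Sub Y) : Hom Y S.quot where
  φ i := (S.p i).mkQ
  comm e := by ext x; first | rfl | (simp only [LinearMap.comp_apply]; exact Submodule.mapQ_apply ..) | simp [Sub.quot, Submodule.mapQ_apply]

/-- The space of morphisms between two representations, as a subspace of the product of Hom spaces. -/
def HomSpace (X Y : QRep K s t) : Submodule K (∀ i, X.V i →ₗ[K] Y.V i) where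
  carrier := {φ | ∀ e, (Y.f e).comp (φ (s e)) = (φ (t e)).comp (X.f e)}
  add_mem' := by
    intro a b ha hb e
    simp only [Set.mem_setOf_eq] at ha hb
    simp [LinearMap.comp_add, LinearMap.add_comp, ha e, hb e]
  zero_mem' := by intro e; simp
  smul_mem' := by
    intro c a ha e
    simp only [Set.mem_setOf_eq] at ha
    simp [LinearMap.comp_smul, LinearMap.smul_comp, ha e]

end QRep
/-- The source of the `e`-th arrow of the linearly oriented quiver `Aₙ`
(vertices `0,…,n-1`, arrows `e → e+1` for `0 ≤ e < n-1`; 0-based indexing). -/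
def ASrc (n : ℕ) (e : Fin (n - 1)) : Fin n := ⟨e.val, by have := e.isLt; omega⟩

/-- The target of the `e`-th arrow of `Aₙ`. -/
def ATgt (n : ℕ) (e : Fin (n - 1)) : Fin n := ⟨e.val + 1, by have := e.isLt; omega⟩

/-- Representations of the linearly oriented quiver `Aₙ`. -/
abbrev ARep (K : Type) [Field K] (n : ℕ) := QRep K (ASrc n) (ATgt n)

/-- The canonical map from `M` to a submodule `T`: the identity if `T = ⊤`, zero otherwise. -/
noncomputable def toSub {K M : Type} [Field K] [AddCommGroup M] [Module K M]
    (T : Submodule K M) : M →ₗ[K] T :=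
  if h : T = ⊤ then LinearMap.codRestrict T LinearMap.id (fun x => by simp [h]) else 0

/-- The vertex spaces of the interval representation `E^{ij}`: `K` for `i ≤ p ≤ j`, zero otherwise. -/
def ESub (K : Type) [Field K] (n i j : ℕ) (p : Fin n) : Submodule K K :=
  if i ≤ p.val ∧ p.val ≤ j then ⊤ else ⊥

/-- The interval representation `E^{ij}` of `Aₙ` (0-based): one-dimensional spaces at
vertices `i,…,j`, identity maps between consecutive ones, zero elsewhere. -/
noncomputable def Eij (K : Type) [Field K] (n i j : ℕ) : ARep K n where
  V p := ESub K n i j p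
  f e := (toSub (ESub K n i j (ATgt n e))).comp (ESub K n i j (ASrc n e)).subtype

/-- Direct sum of interval representations indexed by a list of pairs. -/
noncomputable def intervalSum (K : Type) [Field K] (n : ℕ) (L : List (ℕ × ℕ)) : ARep K n :=
  QRep.dsumList (L.map fun pr => Eij K n pr.1 pr.2)

attribute [reducible] ASrc ATgt Eij

section Stmt7Aux

open QRep

variable {K : Type} [Field K] {n : ℕ}

lemma ESub_top {a b : ℕ} {p : Fin n} (h : a ≤ p.1 ∧ p.1 ≤ b) :
    ESub K n a b p = ⊤ := by simp only [ESub, if_pos h]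

lemma ESub_bot {a b : ℕ} {p : Fin n} (h : ¬(a ≤ p.1 ∧ p.1 ≤ b)) :
    ESub K n a b p = ⊥ := by simp only [ESub, if_neg h]

lemma mem_ESub {a b : ℕ} {p : Fin n} (h : a ≤ p.1 ∧ p.1 ≤ b) (x : K) :
    x ∈ ESub K n a b p := by rw [ESub_top h]; trivial

lemma coeE0 {a b : ℕ} {p : Fin n} (h : ¬(a ≤ p.1 ∧ p.1 ≤ b))
    (x : ESub K n a b p) : (x : K) = 0 :=
  (Submodule.mem_bot K).1 ((ESub_bot h).le x.2)

lemma eltE0 {a b : ℕ} {p : Fin n} (h : ¬(a ≤ p.1 ∧ p.1 ≤ b))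
    (x : ESub K n a b p) : x = 0 := Subtype.ext (coeE0 h x)

lemma coe_Eijf {a b m : ℕ} (hm : m < n - 1) (h1 : a ≤ m + 1) (h2 : m + 1 ≤ b)
    (x : ESub K n a b (ASrc n ⟨m, hm⟩)) :
    Subtype.val ((Eij K n a b).f ⟨m, hm⟩ x) = (x : K) := by
  have ht : ESub K n a b (ATgt n (⟨m, hm⟩ : Fin (n-1))) = ⊤ := ESub_top ⟨h1, h2⟩
  simp only [Eij, toSub, LinearMap.comp_apply, dif_pos ht]
  rfl

noncomputable def pushF (Y : ARep K n) (a : ℕ)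
    (v : ∀ m, (h : m < n) → Y.V ⟨m, h⟩) : ∀ m, (h : m < n) → Y.V ⟨m, h⟩
  | 0, h => v 0 h
  | m+1, h =>
    if m + 1 ≤ a then v (m+1) h
    else Y.f ⟨m, by omega⟩ (pushF Y a v m (by omega))

lemma pushF_self (Y : ARep K n) (a : ℕ) (v : ∀ m, (h : m < n) → Y.V ⟨m, h⟩)
    (h : a < n) : pushF Y a v a h = v a h := by
  cases a with
  | zero => rfl
  | succ m => simp only [pushF]; rw [if_pos le_rfl]

lemma pushF_succ (Y : ARep K n) (a : ℕ) (v : ∀ m, (h : m < n) → Y.V ⟨m, h⟩)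
    {m : ℕ} (hm : a ≤ m) (h : m + 1 < n) :
    pushF Y a v (m+1) h = Y.f ⟨m, by omega⟩ (pushF Y a v m (by omega)) := by
  simp only [pushF]; rw [if_neg (by omega)]


noncomputable def oneE (a b : ℕ) (p : Fin n) : ESub K n a b p :=
  ⟨if a ≤ p.1 ∧ p.1 ≤ b then 1 else 0, by
    split_ifs with hc
    exacts [mem_ESub hc 1, Submodule.zero_mem _]⟩

lemma coe_oneE {a b : ℕ} {p : Fin n} (h : a ≤ p.1 ∧ p.1 ≤ b) :
    ((oneE a b p : ESub K n a b p) : K) = 1 := by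
  simp only [oneE]; rw [if_pos h]

section ExtPart

variable {i j k l : ℕ} {Y : ARep K n}
variable (ext : QRep.Extension (Eij K n k l) Y (Eij K n i j))

noncomputable def xv (p : Fin n) : Y.V p := ext.incl.φ p (oneE k l p)

noncomputable def y0 (m : ℕ) (h : m < n) : Y.V ⟨m, h⟩ :=
  (ext.surj ⟨m, h⟩ (oneE i j ⟨m, h⟩)).choose

lemma proj_y0 (m : ℕ) (h : m < n) :
    ext.proj.φ ⟨m, h⟩ (y0 ext m h) = oneE i j ⟨m, h⟩ :=
  (ext.surj ⟨m, h⟩ (oneE i j ⟨m, h⟩)).choose_spec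

noncomputable def yv (p : Fin n) : Y.V p := pushF Y i (y0 ext) p.1 p.2

lemma yv_succ {m : ℕ} (hm : i ≤ m) (h : m + 1 < n) :
    yv ext ⟨m+1, h⟩ = Y.f ⟨m, by omega⟩ (yv ext ⟨m, by omega⟩) :=
  pushF_succ Y i (y0 ext) hm h

lemma projK_yv (hij : i ≤ j) : ∀ m, i ≤ m → m ≤ j → ∀ (h : m < n),
    Subtype.val (ext.proj.φ ⟨m, h⟩ (yv ext ⟨m, h⟩)) = 1 := by
  intro m hm
  induction m, hm using Nat.le_induction with
  | base =>
    intro _ h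
    have hb : yv ext ⟨i, h⟩ = y0 ext i h := pushF_self Y i (y0 ext) h
    rw [hb, proj_y0]
    exact coe_oneE ⟨le_rfl, hij⟩
  | succ m hm ih =>
    intro hmj h
    have hm' : m < n - 1 := by omega
    have hstep : yv ext ⟨m+1, h⟩ = Y.f ⟨m, hm'⟩ (yv ext ⟨m, by omega⟩) := yv_succ ext hm h
    rw [hstep]
    have hcomm : ext.proj.φ ⟨m+1, h⟩ (Y.f ⟨m, hm'⟩ (yv ext ⟨m, by omega⟩))
        = (Eij K n i j).f ⟨m, hm'⟩ (ext.proj.φ ⟨m, by omega⟩ (yv ext ⟨m, by omega⟩)) :=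
      (LinearMap.congr_fun (ext.proj.comm ⟨m, hm'⟩) _).symm
    rw [hcomm, coe_Eijf hm' (by omega) (by omega)]
    exact ih (by omega) (by omega)

lemma smul_xv (p : Fin n) (hp : k ≤ p.1 ∧ p.1 ≤ l) (v : ESub K n k l p) :
    ext.incl.φ p v = Subtype.val v • xv ext p := by
  have h0 : v = Subtype.val v • oneE k l p := by
    apply Subtype.ext
    simp only [SetLike.val_smul, smul_eq_mul]
    rw [coe_oneE hp, mul_one]
  calc ext.incl.φ p v = ext.incl.φ p (Subtype.val v • oneE k l p) := by rw [← h0]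
  _ = Subtype.val v • xv ext p := by rw [map_smul]; rfl

lemma xv_succ {m : ℕ} (hk : k ≤ m) (hl : m + 1 ≤ l) (h : m + 1 < n) :
    xv ext ⟨m+1, h⟩ = Y.f ⟨m, by omega⟩ (xv ext ⟨m, by omega⟩) := by
  have hm' : m < n - 1 := by omega
  have hcomm : Y.f ⟨m, hm'⟩ (ext.incl.φ ⟨m, by omega⟩ (oneE k l ⟨m, by omega⟩))
      = ext.incl.φ ⟨m+1, h⟩ ((Eij K n k l).f ⟨m, hm'⟩ (oneE k l ⟨m, by omega⟩)) :=
    LinearMap.congr_fun (ext.incl.comm ⟨m, hm'⟩) _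
  have he : (Eij K n k l).f ⟨m, hm'⟩ (oneE k l ⟨m, by omega⟩) = oneE k l ⟨m+1, h⟩ := by
    apply Subtype.ext
    rw [coe_Eijf hm' (by omega) hl]
    rw [coe_oneE ⟨hk, show m ≤ l by omega⟩, coe_oneE ⟨show k ≤ m + 1 by omega, hl⟩]
  show ext.incl.φ ⟨m+1, h⟩ (oneE k l ⟨m+1, h⟩) = _
  rw [← he, ← hcomm]
  rfl

lemma projK_incl (p : Fin n) (x : (Eij K n k l).V p) :
    Subtype.val (ext.proj.φ p (ext.incl.φ p x)) = 0 := by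
  have hm : ext.incl.φ p x ∈ LinearMap.range (ext.incl.φ p) := ⟨x, rfl⟩
  rw [← ext.exact p] at hm
  rw [LinearMap.mem_ker.1 hm]
  rfl

lemma mem_range_of (p : Fin n) (w : Y.V p) (hw : Subtype.val (ext.proj.φ p w) = 0) :
    w ∈ LinearMap.range (ext.incl.φ p) := by
  rw [← ext.exact p]
  exact LinearMap.mem_ker.2 (Subtype.ext hw)

include ext in
lemma Yzero (hij : i ≤ j) (h1 : i + 1 ≤ k) (hjl : j ≤ l) (p : Fin n)
    (hp : ¬(i ≤ p.1 ∧ p.1 ≤ l)) (w : Y.V p) : w = 0 := by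
  obtain ⟨v, hv⟩ := mem_range_of ext p w (coeE0 (a := i) (b := j) (by omega) _)
  rw [← hv, eltE0 (show ¬(k ≤ p.1 ∧ p.1 ≤ l) by omega) v, map_zero]

noncomputable def qmap (p : Fin n) : Y.V p →ₗ[K] Y.V p :=
  LinearMap.id - (((ESub K n i j p).subtype).comp (ext.proj.φ p)).smulRight (yv ext p)

lemma qmap_apply (p : Fin n) (w : Y.V p) :
    qmap ext p w = w - Subtype.val (ext.proj.φ p w) • yv ext p := rfl

noncomputable def rφ (hq : ∀ p w, qmap ext p w ∈ LinearMap.range (ext.incl.φ p))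
    (p : Fin n) : Y.V p →ₗ[K] (Eij K n k l).V p :=
  (LinearEquiv.ofInjective (ext.incl.φ p) (ext.inj p)).symm.toLinearMap ∘ₗ
    LinearMap.codRestrict _ (qmap ext p) (hq p)

lemma incl_rφ (hq : ∀ p w, qmap ext p w ∈ LinearMap.range (ext.incl.φ p))
    (p : Fin n) (w : Y.V p) :
    ext.incl.φ p (rφ ext hq p w) = qmap ext p w := by
  have h2 := (LinearEquiv.ofInjective (ext.incl.φ p) (ext.inj p)).apply_symm_apply
    ⟨qmap ext p w, hq p w⟩
  have h4 := congrArg Subtype.val h2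
  rw [LinearEquiv.ofInjective_apply] at h4
  exact h4

noncomputable def gmap (Y2 : ∀ p : Fin n, Y.V p) (p : Fin n) :
    (QRep.dsum (Eij K n i l) (Eij K n k j)).V p →ₗ[K] Y.V p :=
  (((ESub K n i l p).subtype.comp
      (LinearMap.fst K (ESub K n i l p) (ESub K n k j p))).smulRight (yv ext p))
  + (((ESub K n k j p).subtype.comp
      (LinearMap.snd K (ESub K n i l p) (ESub K n k j p))).smulRight (Y2 p))

lemma gmap_apply (Y2 : ∀ p : Fin n, Y.V p) (p : Fin n)
    (a : ESub K n i l p) (b : ESub K n k j p) :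
    gmap ext Y2 p (a, b) = Subtype.val a • yv ext p + Subtype.val b • Y2 p := rfl


noncomputable def Y2v (c : K) (p : Fin n) : Y.V p :=
  if k ≤ p.1 ∧ p.1 ≤ j then xv ext p - c⁻¹ • yv ext p else 0

lemma Y2v_pos (c : K) {p : Fin n} (hp : k ≤ p.1 ∧ p.1 ≤ j) :
    Y2v ext c p = xv ext p - c⁻¹ • yv ext p := if_pos hp

lemma Y2v_neg (c : K) {p : Fin n} (hp : ¬(k ≤ p.1 ∧ p.1 ≤ j)) :
    Y2v ext c p = 0 := if_neg hp

noncomputable def πm (p : Fin n) : Y.V p →ₗ[K] K :=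
  ((ESub K n i j p).subtype).comp (ext.proj.φ p)

lemma πm_apply (p : Fin n) (w : Y.V p) :
    πm ext p w = Subtype.val (ext.proj.φ p w) := rfl

end ExtPart

lemma iso_symm {ι E : Type} {s t : E → ι} {X Z : QRep K s t} :
    QRep.Iso X Z → QRep.Iso Z X := by
  rintro ⟨f, hf⟩
  refine ⟨⟨fun p => (LinearEquiv.ofBijective (f.φ p) (hf p)).symm.toLinearMap,
    fun e => ?_⟩, fun p => (LinearEquiv.ofBijective (f.φ p) (hf p)).symm.bijective⟩
  apply LinearMap.ext; intro z
  apply (hf (t e)).1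
  have h1 : ∀ (w : X.V (s e)), f.φ (t e) (X.f e w) = Z.f e (f.φ (s e) w) :=
    fun w => (LinearMap.congr_fun (f.comm e) w).symm
  have h2 : f.φ (t e) ((LinearEquiv.ofBijective (f.φ (t e)) (hf (t e))).symm (Z.f e z))
      = Z.f e z := (LinearEquiv.ofBijective (f.φ (t e)) (hf (t e))).apply_symm_apply _
  have h3 : f.φ (s e) ((LinearEquiv.ofBijective (f.φ (s e)) (hf (s e))).symm z) = z :=
    (LinearEquiv.ofBijective (f.φ (s e)) (hf (s e))).apply_symm_apply z
  simp only [LinearMap.coe_comp, Function.comp_apply, LinearEquiv.coe_coe]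
  rw [h2, h1, h3]

end Stmt7Aux
set_option maxHeartbeats 2000000 in
/-- if `i+1 ≤ k ≤ j+1 ≤ l` and `Y` is a non-trivial extension of `E^{ij}` by
`E^{kl}`, then `Y ≅ E^{il} ⊕ E^{kj}` (where `E^{kj}` is interpreted as the zero representation when
`k = j+1`, as is automatic for our `Eij` when `k > j`). -/
theorem stmt7 (K : Type) [Field K] (n i j k l : ℕ)
    (hij : i ≤ j) (hkl : k ≤ l) (hl : l < n)
    (h1 : i + 1 ≤ k) (h2 : k ≤ j + 1) (h3 : j + 1 ≤ l)
    (Y : ARep K n) (ext : QRep.Extension (Eij K n k l) Y (Eij K n i j))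
    (hnt : ¬ ext.Trivial) :
    QRep.Iso Y (QRep.dsum (Eij K n i l) (Eij K n k j)) := by
  have hjn : j + 1 < n := by omega
  have hy0 : Subtype.val (ext.proj.φ ⟨j+1, hjn⟩ (yv ext ⟨j+1, hjn⟩)) = 0 :=
    coeE0 (a := i) (b := j) (show ¬(i ≤ j + 1 ∧ j + 1 ≤ j) by omega) _
  obtain ⟨v, hv⟩ := mem_range_of ext _ _ hy0
  set c : K := Subtype.val v with hc_def
  have hyx : yv ext ⟨j+1, hjn⟩ = c • xv ext ⟨j+1, hjn⟩ := by
    rw [← hv]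
    exact smul_xv ext _ ⟨show k ≤ j + 1 from h2, show j + 1 ≤ l from h3⟩ v
  by_cases hc : c = 0
  · -- extension splits: contradiction
    exfalso
    have hyv0 : yv ext ⟨j+1, hjn⟩ = 0 := by rw [hyx, hc, zero_smul]
    have hq : ∀ p w, qmap ext p w ∈ LinearMap.range (ext.incl.φ p) := by
      intro p w
      by_cases hpil : i ≤ p.1 ∧ p.1 ≤ l
      · by_cases hpj : p.1 ≤ j
        · apply mem_range_of
          have hy1 : Subtype.val (ext.proj.φ p (yv ext p)) = 1 :=
            projK_yv ext hij p.1 (by omega) hpj p.2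
          have expand : ext.proj.φ p (qmap ext p w)
              = ext.proj.φ p w - Subtype.val (ext.proj.φ p w) • ext.proj.φ p (yv ext p) := by
            rw [qmap_apply, map_sub, map_smul]
          rw [expand, AddSubgroupClass.coe_sub, SetLike.val_smul, smul_eq_mul, hy1,
            mul_one, sub_self]
        · have h0 : Subtype.val (ext.proj.φ p w) = 0 :=
            coeE0 (a := i) (b := j) (by omega) _
          rw [qmap_apply, h0, zero_smul, sub_zero]
          exact mem_range_of ext p w h0
      · have hw : w = 0 := Yzero ext hij h1 (by omega) p hpil w
        rw [hw, map_zero]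
        exact Submodule.zero_mem _
    refine hnt ⟨⟨rφ ext hq, ?_⟩, ?_⟩
    · intro e
      obtain ⟨m, hm⟩ := e
      have hmn : m < n := by omega
      have hm1n : m + 1 < n := by omega
      apply LinearMap.ext; intro w
      apply ext.inj (ATgt n ⟨m, hm⟩)
      have hL : ext.incl.φ (ATgt n ⟨m, hm⟩)
            ((Eij K n k l).f ⟨m, hm⟩ (rφ ext hq (ASrc n ⟨m, hm⟩) w))
          = Y.f ⟨m, hm⟩ (ext.incl.φ (ASrc n ⟨m, hm⟩) (rφ ext hq (ASrc n ⟨m, hm⟩) w)) :=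
        (LinearMap.congr_fun (ext.incl.comm ⟨m, hm⟩) _).symm
      show ext.incl.φ (ATgt n ⟨m, hm⟩)
            ((Eij K n k l).f ⟨m, hm⟩ (rφ ext hq (ASrc n ⟨m, hm⟩) w))
          = ext.incl.φ (ATgt n ⟨m, hm⟩) (rφ ext hq (ATgt n ⟨m, hm⟩) (Y.f ⟨m, hm⟩ w))
      rw [hL, incl_rφ, incl_rφ]
      have key : Subtype.val (ext.proj.φ ⟨m, hmn⟩ w) • Y.f ⟨m, hm⟩ (yv ext ⟨m, hmn⟩)
          = Subtype.val (ext.proj.φ ⟨m+1, hm1n⟩ (Y.f ⟨m, hm⟩ w)) • yv ext ⟨m+1, hm1n⟩ := by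
        rcases lt_or_ge m i with hmi | hmi
        · have hw : w = 0 := Yzero ext hij h1 (by omega) ⟨m, hmn⟩
            (show ¬(i ≤ m ∧ m ≤ l) by omega) w
          rw [hw]; simp
        · rcases le_or_gt (m+1) j with hmj | hmj
          · have hys : Y.f ⟨m, hm⟩ (yv ext ⟨m, hmn⟩) = yv ext ⟨m+1, hm1n⟩ :=
              (yv_succ ext hmi hm1n).symm
            have hps : Subtype.val (ext.proj.φ ⟨m+1, hm1n⟩ (Y.f ⟨m, hm⟩ w))
                = Subtype.val (ext.proj.φ ⟨m, hmn⟩ w) := by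
              have hcomm : ext.proj.φ ⟨m+1, hm1n⟩ (Y.f ⟨m, hm⟩ w)
                  = (Eij K n i j).f ⟨m, hm⟩ (ext.proj.φ ⟨m, hmn⟩ w) :=
                (LinearMap.congr_fun (ext.proj.comm ⟨m, hm⟩) w).symm
              rw [hcomm, coe_Eijf hm (by omega) hmj]
            rw [hys, hps]
          · rcases le_or_gt m j with hmj2 | hmj2
            · have hmj3 : m = j := by omega
              subst hmj3
              have hys : Y.f ⟨m, hm⟩ (yv ext ⟨m, hmn⟩) = yv ext ⟨m+1, hm1n⟩ :=
                (yv_succ ext hmi hm1n).symm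
              rw [hys, show yv ext ⟨m+1, hm1n⟩ = 0 from hyv0, smul_zero, smul_zero]
            · have hz1 : Subtype.val (ext.proj.φ ⟨m, hmn⟩ w) = 0 :=
                coeE0 (a := i) (b := j) (show ¬(i ≤ m ∧ m ≤ j) by omega) _
              have hz2 : Subtype.val (ext.proj.φ ⟨m+1, hm1n⟩ (Y.f ⟨m, hm⟩ w)) = 0 :=
                coeE0 (a := i) (b := j) (show ¬(i ≤ m + 1 ∧ m + 1 ≤ j) by omega) _
              rw [hz1, hz2, zero_smul, zero_smul]
      have final : Y.f ⟨m, hm⟩ (qmap ext ⟨m, hmn⟩ w)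
          = qmap ext ⟨m+1, hm1n⟩ (Y.f ⟨m, hm⟩ w) := by
        rw [qmap_apply, qmap_apply, map_sub, map_smul, key]
      exact final
    · intro p x
      apply ext.inj p
      rw [incl_rφ, qmap_apply, projK_incl, zero_smul, sub_zero]
  · -- c ≠ 0 : construct the isomorphism
    have hyc : ∀ m, j + 1 ≤ m → m ≤ l → ∀ (h : m < n), yv ext ⟨m, h⟩ = c • xv ext ⟨m, h⟩ := by
      intro m hm
      induction m, hm using Nat.le_induction with
      | base => intro _ h; exact hyx
      | succ m hm ih =>
        intro hml h
        rw [yv_succ ext (by omega) h, ih (by omega) (by omega), map_smul,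
          ← xv_succ ext (by omega) (by omega) h]
    have hyc' : ∀ p : Fin n, j + 1 ≤ p.1 → p.1 ≤ l → yv ext p = c • xv ext p :=
      fun p ha hb => hyc p.1 ha hb p.2
    have hyv1 : ∀ p : Fin n, i ≤ p.1 → p.1 ≤ j → πm ext p (yv ext p) = 1 :=
      fun p hp1 hp2 => projK_yv ext hij p.1 hp1 hp2 p.2
    have hxv0 : ∀ p : Fin n, πm ext p (xv ext p) = 0 := fun p => projK_incl ext p _
    have hsx : ∀ (p : Fin n), ∀ (β : K),
        ext.incl.φ p (β • oneE k l p) = β • xv ext p := by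
      intro p β
      rw [map_smul]; rfl
    have hco : ∀ (p : Fin n), k ≤ p.1 → p.1 ≤ l → ∀ (β : K),
        Subtype.val ((β : K) • (oneE k l p : ESub K n k l p)) = β := by
      intro p hp1 hp2 β
      rw [SetLike.val_smul, smul_eq_mul, coe_oneE ⟨hp1, hp2⟩, mul_one]
    have hxinj : ∀ (p : Fin n), k ≤ p.1 → p.1 ≤ l → ∀ (β γ : K),
        β • xv ext p = γ • xv ext p → β = γ := by
      intro p hp1 hp2 β γ hβγ
      have h5 : ext.incl.φ p (β • oneE k l p) = ext.incl.φ p (γ • oneE k l p) := by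
        rw [hsx p β, hsx p γ, hβγ]
      have h7 := congrArg Subtype.val (ext.inj p h5)
      rw [hco p hp1 hp2 β, hco p hp1 hp2 γ] at h7
      exact h7
    apply iso_symm
    refine ⟨⟨gmap ext (Y2v ext c), ?_⟩, ?_⟩
    · -- commutes with the arrow maps
      intro e
      obtain ⟨m, hm⟩ := e
      have hmn : m < n := by omega
      have hm1n : m + 1 < n := by omega
      apply LinearMap.ext
      rintro ⟨a, b⟩
      have hA : Subtype.val a • Y.f ⟨m, hm⟩ (yv ext ⟨m, hmn⟩)
          = Subtype.val ((Eij K n i l).f ⟨m, hm⟩ a) • yv ext ⟨m+1, hm1n⟩ := by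
        by_cases hpa : i ≤ m ∧ m ≤ l
        · by_cases hml : m + 1 ≤ l
          · rw [coe_Eijf hm (by omega) hml, ← yv_succ ext hpa.1 hm1n]
          · have hz : Y.f ⟨m, hm⟩ (yv ext ⟨m, hmn⟩) = 0 :=
              Yzero ext hij h1 (by omega) ⟨m+1, hm1n⟩
                (show ¬(i ≤ m + 1 ∧ m + 1 ≤ l) by omega) _
            have hz2 : Subtype.val ((Eij K n i l).f ⟨m, hm⟩ a) = 0 :=
              coeE0 (a := i) (b := l) (show ¬(i ≤ m + 1 ∧ m + 1 ≤ l) by omega) _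
            rw [hz, hz2, smul_zero, zero_smul]
        · have ha0 : Subtype.val a = 0 := coeE0 (a := i) (b := l) hpa a
          have ha1 : a = 0 := Subtype.ext ha0
          rw [ha0, ha1]; simp
      have hB : Subtype.val b • Y.f ⟨m, hm⟩ (Y2v ext c ⟨m, hmn⟩)
          = Subtype.val ((Eij K n k j).f ⟨m, hm⟩ b) • Y2v ext c ⟨m+1, hm1n⟩ := by
        by_cases hpb : k ≤ m ∧ m ≤ j
        · by_cases hmj : m + 1 ≤ j
          · rw [Y2v_pos ext c (p := ⟨m, hmn⟩) hpb,
              Y2v_pos ext c (p := ⟨m+1, hm1n⟩) ⟨show k ≤ m + 1 by omega, show m + 1 ≤ j from hmj⟩,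
              map_sub, map_smul, ← xv_succ ext hpb.1 (by omega) hm1n,
              ← yv_succ ext (by omega) hm1n,
              coe_Eijf hm (by omega) hmj]
          · rw [Y2v_pos ext c (p := ⟨m, hmn⟩) hpb, map_sub, map_smul,
              ← xv_succ ext hpb.1 (by omega) hm1n, ← yv_succ ext (by omega) hm1n,
              hyc (m+1) (by omega) (by omega) hm1n, smul_smul,
              inv_mul_cancel₀ hc, one_smul, sub_self, smul_zero,
              show Subtype.val ((Eij K n k j).f ⟨m, hm⟩ b) = 0 from
                coeE0 (a := k) (b := j) (show ¬(k ≤ m + 1 ∧ m + 1 ≤ j) by omega) _,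
              zero_smul]
        · have hb0 : Subtype.val b = 0 := coeE0 (a := k) (b := j) hpb b
          have hb1 : b = 0 := Subtype.ext hb0
          rw [hb0, hb1]; simp
      have goal2 : Y.f ⟨m, hm⟩ (gmap ext (Y2v ext c) ⟨m, hmn⟩ (a, b))
          = gmap ext (Y2v ext c) ⟨m+1, hm1n⟩
              ((Eij K n i l).f ⟨m, hm⟩ a, (Eij K n k j).f ⟨m, hm⟩ b) := by
        rw [gmap_apply, gmap_apply, map_add, map_smul, map_smul, hA, hB]
      exact goal2
    · -- bijective at every vertex
      intro p
      constructor
      · -- injective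
        rintro ⟨a1, a2⟩ ⟨b1, b2⟩ hxy
        rw [gmap_apply, gmap_apply] at hxy
        by_cases hpil : i ≤ p.1 ∧ p.1 ≤ l
        · by_cases hpk : k ≤ p.1
          · by_cases hpj : p.1 ≤ j
            · rw [Y2v_pos ext c ⟨hpk, hpj⟩] at hxy
              have hxy' : (Subtype.val a1 - Subtype.val b1) • yv ext p
                  + (Subtype.val a2 - Subtype.val b2) • (xv ext p - c⁻¹ • yv ext p) = 0 := by
                rw [sub_smul, sub_smul, sub_add_sub_comm, hxy, sub_self]
              have hP := congrArg (πm ext p) hxy'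
              simp only [map_add, map_smul, map_sub, map_zero] at hP
              rw [hyv1 p (by omega) hpj, hxv0 p] at hP
              have hu : Subtype.val a1 - Subtype.val b1
                  = (Subtype.val a2 - Subtype.val b2) * c⁻¹ := by
                simp only [smul_eq_mul] at hP
                linear_combination hP
              have hx0 : (Subtype.val a2 - Subtype.val b2) • xv ext p = 0 := by
                have hrw : (Subtype.val a1 - Subtype.val b1) • yv ext p
                    + (Subtype.val a2 - Subtype.val b2) • (xv ext p - c⁻¹ • yv ext p)
                    = (Subtype.val a2 - Subtype.val b2) • xv ext p := by
                  rw [hu]; module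
                rw [← hrw]; exact hxy'
              have h20 : Subtype.val a2 - Subtype.val b2 = 0 :=
                hxinj p hpk (by omega) _ 0 (by rw [hx0, zero_smul])
              have h10 : Subtype.val a1 - Subtype.val b1 = 0 := by
                rw [hu, h20, zero_mul]
              exact Prod.ext (Subtype.ext (sub_eq_zero.1 h10)) (Subtype.ext (sub_eq_zero.1 h20))
            · have ha2 : Subtype.val a2 = 0 := coeE0 (a := k) (b := j) (by omega) a2
              have hb2 : Subtype.val b2 = 0 := coeE0 (a := k) (b := j) (by omega) b2
              rw [ha2, hb2, zero_smul, add_zero, add_zero] at hxy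
              rw [hyc' p (by omega) hpil.2, smul_smul, smul_smul] at hxy
              have hmc := hxinj p hpk hpil.2 _ _ hxy
              have h1v : Subtype.val a1 = Subtype.val b1 := mul_right_cancel₀ hc hmc
              exact Prod.ext (Subtype.ext h1v) (Subtype.ext (by rw [ha2, hb2]))
          · have ha2 : Subtype.val a2 = 0 := coeE0 (a := k) (b := j) (by omega) a2
            have hb2 : Subtype.val b2 = 0 := coeE0 (a := k) (b := j) (by omega) b2
            rw [ha2, hb2, zero_smul, add_zero, add_zero] at hxy
            have hP := congrArg (πm ext p) hxy
            rw [map_smul, map_smul, hyv1 p hpil.1 (by omega)] at hP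
            simp only [smul_eq_mul, mul_one] at hP
            exact Prod.ext (Subtype.ext hP) (Subtype.ext (by rw [ha2, hb2]))
        · have ha1 : a1 = 0 := eltE0 (show ¬(i ≤ p.1 ∧ p.1 ≤ l) from hpil) a1
          have hb1 : b1 = 0 := eltE0 hpil b1
          have ha2 : a2 = 0 := eltE0 (show ¬(k ≤ p.1 ∧ p.1 ≤ j) by omega) a2
          have hb2 : b2 = 0 := eltE0 (show ¬(k ≤ p.1 ∧ p.1 ≤ j) by omega) b2
          rw [ha1, hb1, ha2, hb2]
      · -- surjective
        intro w
        by_cases hpil : i ≤ p.1 ∧ p.1 ≤ l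
        · by_cases hpj : p.1 ≤ j
          · have hd : Subtype.val (ext.proj.φ p
                (w - Subtype.val (ext.proj.φ p w) • yv ext p)) = 0 := by
              rw [map_sub, map_smul, AddSubgroupClass.coe_sub, SetLike.val_smul, smul_eq_mul,
                show Subtype.val (ext.proj.φ p (yv ext p)) = 1 from hyv1 p hpil.1 hpj,
                mul_one, sub_self]
            obtain ⟨v', hv'⟩ := mem_range_of ext p _ hd
            by_cases hpk : k ≤ p.1
            · have hxw : Subtype.val v' • xv ext p
                  = w - Subtype.val (ext.proj.φ p w) • yv ext p := by
                rw [← smul_xv ext p ⟨hpk, by omega⟩ v']; exact hv'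
              refine ⟨(⟨Subtype.val (ext.proj.φ p w) + Subtype.val v' * c⁻¹,
                mem_ESub ⟨hpil.1, hpil.2⟩ _⟩, ⟨Subtype.val v', mem_ESub ⟨hpk, hpj⟩ _⟩), ?_⟩
              rw [gmap_apply, Y2v_pos ext c ⟨hpk, hpj⟩]
              show (Subtype.val (ext.proj.φ p w) + Subtype.val v' * c⁻¹) • yv ext p
                  + Subtype.val v' • (xv ext p - c⁻¹ • yv ext p) = w
              have hmod : (Subtype.val (ext.proj.φ p w) + Subtype.val v' * c⁻¹) • yv ext p
                  + Subtype.val v' • (xv ext p - c⁻¹ • yv ext p)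
                  = Subtype.val (ext.proj.φ p w) • yv ext p
                    + Subtype.val v' • xv ext p := by module
              rw [hmod, hxw]
              abel
            · have hv'0 : v' = 0 := eltE0 (show ¬(k ≤ p.1 ∧ p.1 ≤ l) by omega) v'
              have h8 : w - Subtype.val (ext.proj.φ p w) • yv ext p = 0 := by
                rw [← hv', hv'0, map_zero]
              refine ⟨(⟨Subtype.val (ext.proj.φ p w), mem_ESub ⟨hpil.1, hpil.2⟩ _⟩, 0), ?_⟩
              rw [gmap_apply]
              show Subtype.val (ext.proj.φ p w) • yv ext p
                  + Subtype.val (0 : (Eij K n k j).V p) • Y2v ext c p = w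
              rw [show Subtype.val (0 : (Eij K n k j).V p) = (0 : K) from rfl,
                zero_smul, add_zero]
              exact (sub_eq_zero.1 h8).symm
          · have h0 : Subtype.val (ext.proj.φ p w) = 0 :=
              coeE0 (a := i) (b := j) (by omega) _
            obtain ⟨v', hv'⟩ := mem_range_of ext p w h0
            have hxw : Subtype.val v' • xv ext p = w := by
              rw [← smul_xv ext p ⟨by omega, hpil.2⟩ v']; exact hv'
            refine ⟨(⟨Subtype.val v' * c⁻¹, mem_ESub ⟨hpil.1, hpil.2⟩ _⟩, 0), ?_⟩
            rw [gmap_apply]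
            show (Subtype.val v' * c⁻¹) • yv ext p
                + Subtype.val (0 : (Eij K n k j).V p) • Y2v ext c p = w
            rw [show Subtype.val (0 : (Eij K n k j).V p) = (0 : K) from rfl,
              zero_smul, add_zero, hyc' p (by omega) hpil.2, smul_smul,
              show Subtype.val v' * c⁻¹ * c = Subtype.val v' from by field_simp]
            exact hxw
        · refine ⟨0, ?_⟩
          rw [map_zero]
          exact (Yzero ext hij h1 (by omega) p hpil w).symm
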